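/- Let p ≥ 1 be an integer and λ ∈ [0,1]. Consider the set S ⊆ (({1,…,p} × {1,2,…} → ℂ) × ({1,…,p} × {1,2,…} → ℂ)) of coefficient pairs (a,b) satisfying a_{1,1} = 1, b_{1,1} = 0, a_{1,k} = b_{1,k} = 0 for 2 ≤ k ≤ p, and Σ_{k=1}^p Σ_{n=2}^∞ (2(k−1) + n(λn + 1 − λ))(|a_{n,k}| + |b_{n,k}|) ≤ 1 (the coefficient set of the class HS_p^0(λ)), as a convex subset of the affine subspace {a_{1,1} = 1} of the product vector space. Then every extreme point (a,b) of S has exactly one nonzero coefficient besides a_{1,1}: either a single a_{n,k} ≠ 0 with n ≥ 2, 1 ≤ k ≤ p and |a_{n,k}| = 1/(2(k−1) + n(λn + 1 − λ)), or a single b_{m,k} ≠ 0 with m ≥ 2, 1 ≤ k ≤ p and |b_{m,k}| = 1/(2(k−1) + m(λm + 1 − λ)). -/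

import Mathlib

open Complex Metric Set

/-- The coefficient set of the class `HS_p^0(λ)`: pairs `(a, b)` of coefficient arrays
(`x.1 n k = a_{n,k}`, `x.2 n k = b_{n,k}`, supported on `1 ≤ n`, `1 ≤ k ≤ p`) with
`a_{1,1} = 1`, `b_{1,1} = 0`, `a_{1,k} = b_{1,k} = 0` for `2 ≤ k ≤ p` and
`Σ_{k=1}^p Σ_{n=2}^∞ (2(k−1) + n(λn+1−λ))(|a_{n,k}| + |b_{n,k}|) ≤ 1`. -/
def ES (p : ℕ) (lam : ℝ) : Set ((ℕ → ℕ → ℂ) × (ℕ → ℕ → ℂ)) :=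
  {x | x.1 1 1 = 1 ∧ x.2 1 1 = 0 ∧
    (∀ k, 2 ≤ k → k ≤ p → x.1 1 k = 0 ∧ x.2 1 k = 0) ∧
    (∀ n k, n = 0 ∨ k = 0 ∨ p < k → x.1 n k = 0 ∧ x.2 n k = 0) ∧
    (∀ k ∈ Finset.Icc 1 p, Summable (fun n : ℕ =>
      if 2 ≤ n then (2 * ((k : ℝ) - 1) + n * (lam * n + 1 - lam)) *
        (‖x.1 n k‖ + ‖x.2 n k‖) else 0)) ∧
    ∑ k ∈ Finset.Icc 1 p, ∑' n : ℕ,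
      (if 2 ≤ n then (2 * ((k : ℝ) - 1) + n * (lam * n + 1 - lam)) *
        (‖x.1 n k‖ + ‖x.2 n k‖) else 0) ≤ 1}

abbrev XX := (ℕ → ℕ → ℂ) × (ℕ → ℕ → ℂ)

/-- the weight -/
def ww (lam : ℝ) (k n : ℕ) : ℝ := 2 * ((k : ℝ) - 1) + n * (lam * n + 1 - lam)

/-- single term -/
noncomputable def TT (lam : ℝ) (x : XX) (k n : ℕ) : ℝ :=
  if 2 ≤ n then (2 * ((k : ℝ) - 1) + n * (lam * n + 1 - lam)) *
    (‖x.1 n k‖ + ‖x.2 n k‖) else 0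

/-- total sum -/
noncomputable def SS (p : ℕ) (lam : ℝ) (x : XX) : ℝ := ∑ k ∈ Finset.Icc 1 p, ∑' n : ℕ, TT lam x k n

lemma mem_ES_iff (p : ℕ) (lam : ℝ) (x : XX) : x ∈ ES p lam ↔
    (x.1 1 1 = 1 ∧ x.2 1 1 = 0 ∧
    (∀ k, 2 ≤ k → k ≤ p → x.1 1 k = 0 ∧ x.2 1 k = 0) ∧
    (∀ n k, n = 0 ∨ k = 0 ∨ p < k → x.1 n k = 0 ∧ x.2 n k = 0) ∧
    (∀ k ∈ Finset.Icc 1 p, Summable (fun n : ℕ => TT lam x k n)) ∧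
    SS p lam x ≤ 1) := Iff.rfl

lemma ww_pos {lam : ℝ} (hlam : 0 ≤ lam) {k n : ℕ} (hk : 1 ≤ k) (hn : 2 ≤ n) :
    0 < ww lam k n := by
  have hk' : (1 : ℝ) ≤ (k : ℝ) := by exact_mod_cast hk
  have hn' : (2 : ℝ) ≤ (n : ℝ) := by exact_mod_cast hn
  have : lam * n + 1 - lam = lam * ((n : ℝ) - 1) + 1 := by ring
  unfold ww
  nlinarith [mul_nonneg hlam (by linarith : (0:ℝ) ≤ (n:ℝ) - 1)]

lemma TT_eq (lam : ℝ) (x : XX) (k n : ℕ) :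
    TT lam x k n = if 2 ≤ n then ww lam k n *
      (‖x.1 n k‖ + ‖x.2 n k‖) else 0 := rfl

/-- value of the coefficient at side `s` -/
def coefAt (s : Bool) (x : XX) (n k : ℕ) : ℂ := cond s (x.1 n k) (x.2 n k)

/-- modify the coefficient at `(s, n₀, k₀)` to `c` -/
def modif (s : Bool) (n₀ k₀ : ℕ) (c : ℂ) (x : XX) : XX :=
  (fun n k => if s = true ∧ n = n₀ ∧ k = k₀ then c else x.1 n k,
   fun n k => if s = false ∧ n = n₀ ∧ k = k₀ then c else x.2 n k)

lemma coefAt_modif_same (s : Bool) (n₀ k₀ : ℕ) (c : ℂ) (x : XX) :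
    coefAt s (modif s n₀ k₀ c x) n₀ k₀ = c := by
  cases s <;> simp [coefAt, modif]

lemma coefAt_modif_ne (s s' : Bool) (n₀ k₀ n k : ℕ) (c : ℂ) (x : XX)
    (h : (s', n, k) ≠ (s, n₀, k₀)) :
    coefAt s' (modif s n₀ k₀ c x) n k = coefAt s' x n k := by
  cases s <;> cases s' <;>
    simp_all [coefAt, modif, Prod.ext_iff]

lemma modif_fst_of_ne (s : Bool) (n₀ k₀ n k : ℕ) (c : ℂ) (x : XX)
    (h : ¬(n = n₀ ∧ k = k₀)) : (modif s n₀ k₀ c x).1 n k = x.1 n k := by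
  simp only [modif]; rw [if_neg (by tauto)]

lemma modif_snd_of_ne (s : Bool) (n₀ k₀ n k : ℕ) (c : ℂ) (x : XX)
    (h : ¬(n = n₀ ∧ k = k₀)) : (modif s n₀ k₀ c x).2 n k = x.2 n k := by
  simp only [modif]; rw [if_neg (by tauto)]

lemma TT_nonneg {lam : ℝ} (hlam : 0 ≤ lam) (x : XX) {k : ℕ} (hk : 1 ≤ k) (n : ℕ) :
    0 ≤ TT lam x k n := by
  rw [TT_eq]
  split
  · exact mul_nonneg (ww_pos hlam hk (by assumption)).le
      (add_nonneg (norm_nonneg _) (norm_nonneg _))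
  · exact le_refl _

/-- The key single-slot modification lemma. -/
lemma setSlot (p : ℕ) (lam : ℝ) (hlam : 0 ≤ lam) (x : XX) (hx : x ∈ ES p lam)
    (s : Bool) (n₀ k₀ : ℕ) (hn : 2 ≤ n₀) (hk1 : 1 ≤ k₀) (hkp : k₀ ≤ p) (c' : ℂ) :
    SS p lam (modif s n₀ k₀ c' x) =
      SS p lam x + ww lam k₀ n₀ * (‖c'‖ - ‖coefAt s x n₀ k₀‖) ∧
    (SS p lam x + ww lam k₀ n₀ * (‖c'‖ - ‖coefAt s x n₀ k₀‖) ≤ 1 →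
      modif s n₀ k₀ c' x ∈ ES p lam) := by
  rw [mem_ES_iff] at hx
  obtain ⟨ha11, hb11, h1k, hsupp, hsumm, hsle⟩ := hx
  set g := modif s n₀ k₀ c' x with hg
  set D := ww lam k₀ n₀ * (‖c'‖ - ‖coefAt s x n₀ k₀‖) with hD
  have hTg : ∀ k n, TT lam g k n = TT lam x k n + if n = n₀ ∧ k = k₀ then D else 0 := by
    intro k n
    by_cases h : n = n₀ ∧ k = k₀
    · obtain ⟨rfl, rfl⟩ := h
      rw [if_pos ⟨rfl, rfl⟩, TT_eq, TT_eq, if_pos hn, if_pos hn]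
      cases s
      · have h1 : g.1 n k = x.1 n k := by simp [hg, modif]
        have h2 : g.2 n k = c' := by simp [hg, modif]
        rw [h1, h2, hD]
        simp only [coefAt, Bool.cond_false]
        ring
      · have h1 : g.1 n k = c' := by simp [hg, modif]
        have h2 : g.2 n k = x.2 n k := by simp [hg, modif]
        rw [h1, h2, hD]
        simp only [coefAt, Bool.cond_true]
        ring
    · rw [if_neg h, add_zero, TT_eq, TT_eq,
        modif_fst_of_ne s n₀ k₀ n k c' x h, modif_snd_of_ne s n₀ k₀ n k c' x h]
  have hrepr : ∀ k, (fun n => TT lam g k n) =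
      fun n => TT lam x k n + (if n = n₀ then (if k = k₀ then D else 0) else 0) := by
    intro k
    funext n
    rw [hTg k n]
    by_cases h1 : n = n₀ <;> by_cases h2 : k = k₀ <;> simp [h1, h2]
  have hsummInd : ∀ k, Summable (fun n : ℕ => if n = n₀ then (if k = k₀ then D else 0) else 0) :=
    fun k => ⟨_, hasSum_ite_eq n₀ _⟩
  have hsummg : ∀ k ∈ Finset.Icc 1 p, Summable (fun n => TT lam g k n) := by
    intro k hk
    rw [hrepr k]
    exact (hsumm k hk).add (hsummInd k)
  have htsum : ∀ k ∈ Finset.Icc 1 p,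
      ∑' n, TT lam g k n = (∑' n, TT lam x k n) + (if k = k₀ then D else 0) := by
    intro k hk
    rw [hrepr k, Summable.tsum_add (hsumm k hk) (hsummInd k), tsum_ite_eq]
  have hk₀mem : k₀ ∈ Finset.Icc 1 p := Finset.mem_Icc.2 ⟨hk1, hkp⟩
  have hSg : SS p lam g = SS p lam x + D := by
    unfold SS
    rw [Finset.sum_congr rfl htsum, Finset.sum_add_distrib]
    congr 1
    rw [Finset.sum_ite_eq' (Finset.Icc 1 p) k₀ (fun _ => D), if_pos hk₀mem]
  refine ⟨hSg, fun hle => ?_⟩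
  rw [mem_ES_iff]
  refine ⟨?_, ?_, ?_, ?_, hsummg, by rw [hSg]; exact hle⟩
  · rw [modif_fst_of_ne s n₀ k₀ 1 1 c' x (by omega)]; exact ha11
  · rw [modif_snd_of_ne s n₀ k₀ 1 1 c' x (by omega)]; exact hb11
  · intro k h2 hkp'
    rw [modif_fst_of_ne s n₀ k₀ 1 k c' x (by omega),
      modif_snd_of_ne s n₀ k₀ 1 k c' x (by omega)]
    exact h1k k h2 hkp'
  · intro n k h
    rw [modif_fst_of_ne s n₀ k₀ n k c' x (by omega),
      modif_snd_of_ne s n₀ k₀ n k c' x (by omega)]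
    exact hsupp n k h

lemma midpoint_openSegment (y z x : XX) (h : y + z = x + x) :
    x ∈ openSegment ℝ y z := by
  refine ⟨1/2, 1/2, by norm_num, by norm_num, by norm_num, ?_⟩
  rw [← smul_add, h, smul_add, ← add_smul]
  norm_num

lemma modif_add_modif (x : XX) (s₀ s₁ : Bool) (n₀ k₀ n₁ k₁ : ℕ)
    (hne : (s₀, n₀, k₀) ≠ (s₁, n₁, k₁)) (u u' v v' : ℂ)
    (hu : u + u' = 2 * coefAt s₀ x n₀ k₀) (hv : v + v' = 2 * coefAt s₁ x n₁ k₁) :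
    modif s₀ n₀ k₀ u (modif s₁ n₁ k₁ v x) + modif s₁ n₁ k₁ v' (modif s₀ n₀ k₀ u' x)
      = x + x := by
  apply Prod.ext
  · funext n k
    show (if s₀ = true ∧ n = n₀ ∧ k = k₀ then u
          else if s₁ = true ∧ n = n₁ ∧ k = k₁ then v else x.1 n k)
        + (if s₁ = true ∧ n = n₁ ∧ k = k₁ then v'
          else if s₀ = true ∧ n = n₀ ∧ k = k₀ then u' else x.1 n k)
        = x.1 n k + x.1 n k
    by_cases hA : s₀ = true ∧ n = n₀ ∧ k = k₀ <;>
      by_cases hB : s₁ = true ∧ n = n₁ ∧ k = k₁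
    · obtain ⟨e1, e2, e3⟩ := hA; obtain ⟨f1, f2, f3⟩ := hB
      refine absurd ?_ hne
      rw [Prod.ext_iff, Prod.ext_iff]
      exact ⟨e1.trans f1.symm, e2.symm.trans f2, e3.symm.trans f3⟩
    · rw [if_pos hA, if_neg hB, if_pos hA]
      obtain ⟨e1, e2, e3⟩ := hA
      have : coefAt s₀ x n₀ k₀ = x.1 n k := by rw [e1, ← e2, ← e3]; rfl
      rw [this] at hu; linear_combination hu
    · rw [if_neg hA, if_pos hB, if_pos hB]
      obtain ⟨e1, e2, e3⟩ := hB
      have : coefAt s₁ x n₁ k₁ = x.1 n k := by rw [e1, ← e2, ← e3]; rfl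
      rw [this] at hv; linear_combination hv
    · rw [if_neg hA, if_neg hB, if_neg hB, if_neg hA]
  · funext n k
    show (if s₀ = false ∧ n = n₀ ∧ k = k₀ then u
          else if s₁ = false ∧ n = n₁ ∧ k = k₁ then v else x.2 n k)
        + (if s₁ = false ∧ n = n₁ ∧ k = k₁ then v'
          else if s₀ = false ∧ n = n₀ ∧ k = k₀ then u' else x.2 n k)
        = x.2 n k + x.2 n k
    by_cases hA : s₀ = false ∧ n = n₀ ∧ k = k₀ <;>
      by_cases hB : s₁ = false ∧ n = n₁ ∧ k = k₁
    · obtain ⟨e1, e2, e3⟩ := hA; obtain ⟨f1, f2, f3⟩ := hB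
      refine absurd ?_ hne
      rw [Prod.ext_iff, Prod.ext_iff]
      exact ⟨e1.trans f1.symm, e2.symm.trans f2, e3.symm.trans f3⟩
    · rw [if_pos hA, if_neg hB, if_pos hA]
      obtain ⟨e1, e2, e3⟩ := hA
      have : coefAt s₀ x n₀ k₀ = x.2 n k := by rw [e1, ← e2, ← e3]; rfl
      rw [this] at hu; linear_combination hu
    · rw [if_neg hA, if_pos hB, if_pos hB]
      obtain ⟨e1, e2, e3⟩ := hB
      have : coefAt s₁ x n₁ k₁ = x.2 n k := by rw [e1, ← e2, ← e3]; rfl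
      rw [this] at hv; linear_combination hv
    · rw [if_neg hA, if_neg hB, if_neg hB, if_neg hA]

lemma modif_add_modif_one (x : XX) (s : Bool) (n₀ k₀ : ℕ) (u u' : ℂ)
    (hu : u + u' = 2 * coefAt s x n₀ k₀) :
    modif s n₀ k₀ u x + modif s n₀ k₀ u' x = x + x := by
  apply Prod.ext
  · funext n k
    show (if s = true ∧ n = n₀ ∧ k = k₀ then u else x.1 n k)
        + (if s = true ∧ n = n₀ ∧ k = k₀ then u' else x.1 n k) = x.1 n k + x.1 n k
    by_cases hA : s = true ∧ n = n₀ ∧ k = k₀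
    · rw [if_pos hA, if_pos hA]
      obtain ⟨e1, e2, e3⟩ := hA
      have : coefAt s x n₀ k₀ = x.1 n k := by rw [e1, ← e2, ← e3]; rfl
      rw [this] at hu; linear_combination hu
    · rw [if_neg hA, if_neg hA]
  · funext n k
    show (if s = false ∧ n = n₀ ∧ k = k₀ then u else x.2 n k)
        + (if s = false ∧ n = n₀ ∧ k = k₀ then u' else x.2 n k) = x.2 n k + x.2 n k
    by_cases hA : s = false ∧ n = n₀ ∧ k = k₀
    · rw [if_pos hA, if_pos hA]
      obtain ⟨e1, e2, e3⟩ := hA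
      have : coefAt s x n₀ k₀ = x.2 n k := by rw [e1, ← e2, ← e3]; rfl
      rw [this] at hu; linear_combination hu
    · rw [if_neg hA, if_neg hA]

lemma abs_real_mul (r : ℝ) (c : ℂ) (hr : 0 ≤ r) :
    ‖(r : ℂ) * c‖ = r * ‖c‖ := by
  rw [norm_mul, Complex.norm_real, Real.norm_eq_abs, _root_.abs_of_nonneg hr]

/-- Every extreme point of the coefficient set of `HS_p^0(λ)` has exactly one nonzero
coefficient besides `a_{1,1} = 1`: a single `a_{n,k}` (`n ≥ 2`) of modulus
`1/(2(k−1) + n(λn+1−λ))`, or a single `b_{m,k}` (`m ≥ 2`) of modulus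
`1/(2(k−1) + m(λm+1−λ))`. -/
theorem extreme_points_form
    (p : ℕ) (hp : 1 ≤ p) (lam : ℝ) (hlam : lam ∈ Set.Icc (0 : ℝ) 1)
    (x : (ℕ → ℕ → ℂ) × (ℕ → ℕ → ℂ)) (hx : x ∈ Set.extremePoints ℝ (ES p lam)) :
    (∃ n k : ℕ, 2 ≤ n ∧ 1 ≤ k ∧ k ≤ p ∧
      ‖x.1 n k‖ = 1 / (2 * ((k : ℝ) - 1) + n * (lam * n + 1 - lam)) ∧
      (∀ m j : ℕ, ¬(m = 1 ∧ j = 1) → ¬(m = n ∧ j = k) → x.1 m j = 0) ∧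
      (∀ m j : ℕ, x.2 m j = 0)) ∨
    (∃ m k : ℕ, 2 ≤ m ∧ 1 ≤ k ∧ k ≤ p ∧
      ‖x.2 m k‖ = 1 / (2 * ((k : ℝ) - 1) + m * (lam * m + 1 - lam)) ∧
      (∀ n j : ℕ, ¬(n = 1 ∧ j = 1) → x.1 n j = 0) ∧
      (∀ n j : ℕ, ¬(n = m ∧ j = k) → x.2 n j = 0)) := by
  obtain ⟨hxS, hext⟩ := hx
  have hlam0 : 0 ≤ lam := hlam.1
  obtain ⟨ha11, hb11, h1k, hsupp, hsumm, hsle⟩ := (mem_ES_iff p lam x).1 hxS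
  have hkey : ∀ y z : XX, y ∈ ES p lam → z ∈ ES p lam → y + z = x + x → y = x := by
    intro y z hy hz hyz
    exact (hext hy hz (midpoint_openSegment y z x hyz))
  -- Claim 1 : the coefficient sum is saturated
  have hS1 : SS p lam x = 1 := by
    by_contra hne1
    have hlt : SS p lam x < 1 := lt_of_le_of_ne hsle hne1
    have hw : 0 < ww lam 1 2 := ww_pos hlam0 le_rfl le_rfl
    set ε : ℝ := (1 - SS p lam x) / ww lam 1 2 with hε
    have hεpos : 0 < ε := div_pos (by linarith) hw
    set c := x.1 2 1 with hc
    have hcoef : coefAt true x 2 1 = c := rfl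
    have hεval : ww lam 1 2 * ε = 1 - SS p lam x := by
      rw [hε]; field_simp
    have hb1 : ‖c + (ε : ℂ)‖ - ‖c‖ ≤ ε := by
      have := norm_add_le c (ε : ℂ)
      rw [Complex.norm_real, Real.norm_eq_abs, abs_of_pos hεpos] at this
      linarith
    have hb2 : ‖c - (ε : ℂ)‖ - ‖c‖ ≤ ε := by
      have := norm_add_le c (-(ε : ℂ))
      rw [norm_neg, Complex.norm_real, Real.norm_eq_abs, abs_of_pos hεpos, ← sub_eq_add_neg] at this
      linarith
    have hcond : ∀ c' : ℂ, ‖c'‖ - ‖c‖ ≤ ε →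
        SS p lam x + ww lam 1 2 * (‖c'‖ - ‖coefAt true x 2 1‖) ≤ 1 := by
      intro c' h
      rw [hcoef]
      have h2 : ww lam 1 2 * (‖c'‖ - ‖c‖) ≤ ww lam 1 2 * ε :=
        mul_le_mul_of_nonneg_left h hw.le
      linarith
    have hy := (setSlot p lam hlam0 x hxS true 2 1 le_rfl le_rfl hp (c + ε)).2 (hcond _ hb1)
    have hz := (setSlot p lam hlam0 x hxS true 2 1 le_rfl le_rfl hp (c - ε)).2 (hcond _ hb2)
    have hyz : modif true 2 1 (c + (ε : ℂ)) x + modif true 2 1 (c - (ε : ℂ)) x = x + x :=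
      modif_add_modif_one x true 2 1 _ _ (by rw [hcoef]; ring)
    have hyx := hkey _ _ hy hz hyz
    have h1 : (modif true 2 1 (c + (ε : ℂ)) x).1 2 1 = c + ε := by simp [modif]
    rw [hyx] at h1
    have : (ε : ℂ) = 0 := by
      have := h1.symm
      rwa [← hc, add_eq_left] at this
    rw [Complex.ofReal_eq_zero] at this
    linarith
  -- Claim 2 : uniqueness of the nonzero coefficient
  have huniq : ∀ (s₀ s₁ : Bool) (n₀ k₀ n₁ k₁ : ℕ), 2 ≤ n₀ → 1 ≤ k₀ → k₀ ≤ p →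
      2 ≤ n₁ → 1 ≤ k₁ → k₁ ≤ p → (s₀, n₀, k₀) ≠ (s₁, n₁, k₁) →
      coefAt s₀ x n₀ k₀ ≠ 0 → coefAt s₁ x n₁ k₁ = 0 := by
    intro s₀ s₁ n₀ k₀ n₁ k₁ hn₀ hk₀1 hk₀p hn₁ hk₁1 hk₁p hne hc
    by_contra hd
    set c := coefAt s₀ x n₀ k₀ with hcdef
    set d := coefAt s₁ x n₁ k₁ with hddef
    have hw₀ : 0 < ww lam k₀ n₀ := ww_pos hlam0 hk₀1 hn₀
    have hw₁ : 0 < ww lam k₁ n₁ := ww_pos hlam0 hk₁1 hn₁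
    have hac : 0 < ‖c‖ := norm_pos_iff.mpr hc
    have had : 0 < ‖d‖ := norm_pos_iff.mpr hd
    set t : ℝ := min 1 (ww lam k₁ n₁ * ‖d‖ / (ww lam k₀ n₀ * ‖c‖)) with ht
    have htpos : 0 < t := lt_min one_pos (div_pos (mul_pos hw₁ had) (mul_pos hw₀ hac))
    have ht1 : t ≤ 1 := min_le_left _ _
    set s : ℝ := t * (ww lam k₀ n₀ * ‖c‖) / (ww lam k₁ n₁ * ‖d‖) with hs
    have hspos : 0 < s := div_pos (mul_pos htpos (mul_pos hw₀ hac)) (mul_pos hw₁ had)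
    have hs1 : s ≤ 1 := by
      rw [hs, div_le_one (mul_pos hw₁ had)]
      have := min_le_right 1 (ww lam k₁ n₁ * ‖d‖ / (ww lam k₀ n₀ * ‖c‖))
      rw [← ht] at this
      calc t * (ww lam k₀ n₀ * ‖c‖)
          ≤ (ww lam k₁ n₁ * ‖d‖ / (ww lam k₀ n₀ * ‖c‖)) *
            (ww lam k₀ n₀ * ‖c‖) :=
            mul_le_mul_of_nonneg_right this (mul_pos hw₀ hac).le
        _ = ww lam k₁ n₁ * ‖d‖ := by field_simp
    have hseq : s * (ww lam k₁ n₁ * ‖d‖) = t * (ww lam k₀ n₀ * ‖c‖) := by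
      rw [hs]; field_simp
    -- build the two perturbed points
    have habs1s : ‖((1 - s : ℝ) : ℂ) * d‖ = (1 - s) * ‖d‖ :=
      abs_real_mul _ _ (by linarith)
    have habs1s' : ‖((1 + s : ℝ) : ℂ) * d‖ = (1 + s) * ‖d‖ :=
      abs_real_mul _ _ (by linarith)
    have habs1t : ‖((1 - t : ℝ) : ℂ) * c‖ = (1 - t) * ‖c‖ :=
      abs_real_mul _ _ (by linarith)
    have habs1t' : ‖((1 + t : ℝ) : ℂ) * c‖ = (1 + t) * ‖c‖ :=
      abs_real_mul _ _ (by linarith)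
    -- first point y
    set z1 := modif s₁ n₁ k₁ (((1 - s : ℝ) : ℂ) * d) x with hz1def
    have hz1slot := setSlot p lam hlam0 x hxS s₁ n₁ k₁ hn₁ hk₁1 hk₁p (((1 - s : ℝ) : ℂ) * d)
    have hz1S : SS p lam z1 = 1 - s * (ww lam k₁ n₁ * ‖d‖) := by
      rw [hz1def, hz1slot.1, hS1, habs1s, ← hddef]; ring
    have hz1mem : z1 ∈ ES p lam := hz1slot.2 (by
      rw [hS1, habs1s, ← hddef]
      have e : ww lam k₁ n₁ * ((1 - s) * ‖d‖ - ‖d‖)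
          = -(s * (ww lam k₁ n₁ * ‖d‖)) := by ring
      have hpos : 0 < s * (ww lam k₁ n₁ * ‖d‖) :=
        mul_pos hspos (mul_pos hw₁ had)
      linarith [e, hpos])
    have hcz1 : coefAt s₀ z1 n₀ k₀ = c := by
      rw [hz1def, coefAt_modif_ne _ _ _ _ _ _ _ _ hne, hcdef]
    have hyslot := setSlot p lam hlam0 z1 hz1mem s₀ n₀ k₀ hn₀ hk₀1 hk₀p (((1 + t : ℝ) : ℂ) * c)
    have hymem : modif s₀ n₀ k₀ (((1 + t : ℝ) : ℂ) * c) z1 ∈ ES p lam := hyslot.2 (by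
      rw [hz1S, habs1t', hcz1]
      have e : ww lam k₀ n₀ * ((1 + t) * ‖c‖ - ‖c‖)
          = t * (ww lam k₀ n₀ * ‖c‖) := by ring
      linarith [e, hseq])
    -- second point z
    set z2 := modif s₀ n₀ k₀ (((1 - t : ℝ) : ℂ) * c) x with hz2def
    have hz2slot := setSlot p lam hlam0 x hxS s₀ n₀ k₀ hn₀ hk₀1 hk₀p (((1 - t : ℝ) : ℂ) * c)
    have hz2S : SS p lam z2 = 1 - t * (ww lam k₀ n₀ * ‖c‖) := by
      rw [hz2def, hz2slot.1, hS1, habs1t, ← hcdef]; ring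
    have hz2mem : z2 ∈ ES p lam := hz2slot.2 (by
      rw [hS1, habs1t, ← hcdef]
      have e : ww lam k₀ n₀ * ((1 - t) * ‖c‖ - ‖c‖)
          = -(t * (ww lam k₀ n₀ * ‖c‖)) := by ring
      have hpos : 0 < t * (ww lam k₀ n₀ * ‖c‖) :=
        mul_pos htpos (mul_pos hw₀ hac)
      linarith [e, hpos])
    have hdz2 : coefAt s₁ z2 n₁ k₁ = d := by
      rw [hz2def, coefAt_modif_ne _ _ _ _ _ _ _ _ (Ne.symm hne), hddef]
    have hzslot := setSlot p lam hlam0 z2 hz2mem s₁ n₁ k₁ hn₁ hk₁1 hk₁p (((1 + s : ℝ) : ℂ) * d)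
    have hzmem : modif s₁ n₁ k₁ (((1 + s : ℝ) : ℂ) * d) z2 ∈ ES p lam := hzslot.2 (by
      rw [hz2S, habs1s', hdz2]
      have e : ww lam k₁ n₁ * ((1 + s) * ‖d‖ - ‖d‖)
          = s * (ww lam k₁ n₁ * ‖d‖) := by ring
      linarith [e, hseq])
    -- midpoint
    have hyz : modif s₀ n₀ k₀ (((1 + t : ℝ) : ℂ) * c) z1
        + modif s₁ n₁ k₁ (((1 + s : ℝ) : ℂ) * d) z2 = x + x := by
      rw [hz1def, hz2def]
      exact modif_add_modif x s₀ s₁ n₀ k₀ n₁ k₁ hne _ _ _ _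
        (by rw [← hcdef]; push_cast; ring) (by rw [← hddef]; push_cast; ring)
    have hyx := hkey _ _ hymem hzmem hyz
    have h1 : coefAt s₀ (modif s₀ n₀ k₀ (((1 + t : ℝ) : ℂ) * c) z1) n₀ k₀
        = ((1 + t : ℝ) : ℂ) * c := coefAt_modif_same _ _ _ _ _
    rw [hyx, ← hcdef] at h1
    have htc : ((t : ℝ) : ℂ) * c = 0 := by
      push_cast at h1 ⊢
      linear_combination -h1
    rcases mul_eq_zero.1 htc with h | h
    · rw [Complex.ofReal_eq_zero] at h; linarith
    · exact hc h
  -- existence of a nonzero coefficient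
  have hex : ∃ (s : Bool) (n k : ℕ), 2 ≤ n ∧ 1 ≤ k ∧ k ≤ p ∧ coefAt s x n k ≠ 0 := by
    by_contra h
    push_neg at h
    have hzero : ∀ k ∈ Finset.Icc 1 p, ∀ n, TT lam x k n = 0 := by
      intro k hk n
      rw [TT_eq]
      split
      · rename_i hn
        obtain ⟨hk1, hkp⟩ := Finset.mem_Icc.1 hk
        rw [show x.1 n k = 0 from h true n k hn hk1 hkp,
          show x.2 n k = 0 from h false n k hn hk1 hkp]
        simp
      · rfl
    have h0 : SS p lam x = 0 := by
      unfold SS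
      apply Finset.sum_eq_zero
      intro k hk
      calc ∑' n, TT lam x k n = ∑' _ : ℕ, (0 : ℝ) := tsum_congr (hzero k hk)
        _ = 0 := tsum_zero
    rw [hS1] at h0
    linarith
  obtain ⟨s0, n, k, hn, hk1, hkp, hc⟩ := hex
  have hkmem : k ∈ Finset.Icc 1 p := Finset.mem_Icc.2 ⟨hk1, hkp⟩
  have hwn : 0 < ww lam k n := ww_pos hlam0 hk1 hn
  cases s0 with
  | true =>
    left
    have hcc : x.1 n k ≠ 0 := hc
    -- all other a's vanish
    have hz1 : ∀ m j : ℕ, ¬(m = 1 ∧ j = 1) → ¬(m = n ∧ j = k) → x.1 m j = 0 := by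
      intro m j h11 hnk
      by_cases hm0 : m = 0
      · exact (hsupp m j (Or.inl hm0)).1
      by_cases hj0 : j = 0
      · exact (hsupp m j (Or.inr (Or.inl hj0))).1
      by_cases hjp : p < j
      · exact (hsupp m j (Or.inr (Or.inr hjp))).1
      by_cases hm1 : m = 1
      · have hj1 : j ≠ 1 := fun hj => h11 ⟨hm1, hj⟩
        rw [hm1]
        exact (h1k j (by omega) (by omega)).1
      · have hm2 : 2 ≤ m := by omega
        exact huniq true true n k m j hn hk1 hkp hm2 (by omega) (by omega)
          (by simp [Prod.ext_iff]; omega) hc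
    have hz2 : ∀ m j : ℕ, x.2 m j = 0 := by
      intro m j
      by_cases hm0 : m = 0
      · exact (hsupp m j (Or.inl hm0)).2
      by_cases hj0 : j = 0
      · exact (hsupp m j (Or.inr (Or.inl hj0))).2
      by_cases hjp : p < j
      · exact (hsupp m j (Or.inr (Or.inr hjp))).2
      by_cases hm1 : m = 1
      · by_cases hjone : j = 1
        · rw [hm1, hjone]; exact hb11
        · rw [hm1]; exact (h1k j (by omega) (by omega)).2
      · have hm2 : 2 ≤ m := by omega
        exact huniq true false n k m j hn hk1 hkp hm2 (by omega) (by omega)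
          (by simp [Prod.ext_iff]) hc
    -- the modulus
    have hTsum : ∀ k' ∈ Finset.Icc 1 p, ∑' n', TT lam x k' n' =
        if k' = k then ww lam k n * ‖x.1 n k‖ else 0 := by
      intro k' hk'
      obtain ⟨hk'1, hk'p⟩ := Finset.mem_Icc.1 hk'
      by_cases hkk : k' = k
      · subst hkk
        rw [if_pos rfl]
        have : (fun n' => TT lam x k' n') =
            fun n' => if n' = n then ww lam k' n * ‖x.1 n k'‖ else 0 := by
          funext n'
          by_cases hnn : n' = n
          · subst hnn
            rw [if_pos rfl, TT_eq, if_pos hn, hz2 n' k']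
            simp
          · rw [if_neg hnn, TT_eq]
            split
            · rename_i hn'
              rw [hz1 n' k' (by omega) (by tauto), hz2 n' k']
              simp
            · rfl
        rw [this, tsum_ite_eq]
      · rw [if_neg hkk]
        have : (fun n' => TT lam x k' n') = fun _ => (0 : ℝ) := by
          funext n'
          rw [TT_eq]
          split
          · rename_i hn'
            rw [hz1 n' k' (by omega) (by tauto), hz2 n' k']
            simp
          · rfl
        rw [this, tsum_zero]
    have hSval : SS p lam x = ww lam k n * ‖x.1 n k‖ := by
      unfold SS
      rw [Finset.sum_congr rfl hTsum,
        Finset.sum_ite_eq' (Finset.Icc 1 p) k (fun _ => ww lam k n * ‖x.1 n k‖),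
        if_pos hkmem]
    rw [hS1] at hSval
    refine ⟨n, k, hn, hk1, hkp, ?_, hz1, hz2⟩
    show ‖x.1 n k‖ = 1 / ww lam k n
    rw [eq_div_iff hwn.ne']
    linarith
  | false =>
    right
    have hcc : x.2 n k ≠ 0 := hc
    have hz2 : ∀ m j : ℕ, ¬(m = n ∧ j = k) → x.2 m j = 0 := by
      intro m j hnk
      by_cases hm0 : m = 0
      · exact (hsupp m j (Or.inl hm0)).2
      by_cases hj0 : j = 0
      · exact (hsupp m j (Or.inr (Or.inl hj0))).2
      by_cases hjp : p < j
      · exact (hsupp m j (Or.inr (Or.inr hjp))).2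
      by_cases hm1 : m = 1
      · by_cases hjone : j = 1
        · rw [hm1, hjone]; exact hb11
        · rw [hm1]; exact (h1k j (by omega) (by omega)).2
      · have hm2 : 2 ≤ m := by omega
        exact huniq false false n k m j hn hk1 hkp hm2 (by omega) (by omega)
          (by simp [Prod.ext_iff]; omega) hc
    have hz1 : ∀ m j : ℕ, ¬(m = 1 ∧ j = 1) → x.1 m j = 0 := by
      intro m j h11
      by_cases hm0 : m = 0
      · exact (hsupp m j (Or.inl hm0)).1
      by_cases hj0 : j = 0
      · exact (hsupp m j (Or.inr (Or.inl hj0))).1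
      by_cases hjp : p < j
      · exact (hsupp m j (Or.inr (Or.inr hjp))).1
      by_cases hm1 : m = 1
      · rw [hm1]; exact (h1k j (by omega) (by omega)).1
      · have hm2 : 2 ≤ m := by omega
        exact huniq false true n k m j hn hk1 hkp hm2 (by omega) (by omega)
          (by simp [Prod.ext_iff]) hc
    have hTsum : ∀ k' ∈ Finset.Icc 1 p, ∑' n', TT lam x k' n' =
        if k' = k then ww lam k n * ‖x.2 n k‖ else 0 := by
      intro k' hk'
      obtain ⟨hk'1, hk'p⟩ := Finset.mem_Icc.1 hk'
      by_cases hkk : k' = k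
      · subst hkk
        rw [if_pos rfl]
        have : (fun n' => TT lam x k' n') =
            fun n' => if n' = n then ww lam k' n * ‖x.2 n k'‖ else 0 := by
          funext n'
          by_cases hnn : n' = n
          · subst hnn
            rw [if_pos rfl, TT_eq, if_pos hn, hz1 n' k' (by omega)]
            simp
          · rw [if_neg hnn, TT_eq]
            split
            · rename_i hn'
              rw [hz1 n' k' (by omega), hz2 n' k' (by tauto)]
              simp
            · rfl
        rw [this, tsum_ite_eq]
      · rw [if_neg hkk]
        have : (fun n' => TT lam x k' n') = fun _ => (0 : ℝ) := by
          funext n'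
          rw [TT_eq]
          split
          · rename_i hn'
            rw [hz1 n' k' (by omega), hz2 n' k' (by tauto)]
            simp
          · rfl
        rw [this, tsum_zero]
    have hSval : SS p lam x = ww lam k n * ‖x.2 n k‖ := by
      unfold SS
      rw [Finset.sum_congr rfl hTsum,
        Finset.sum_ite_eq' (Finset.Icc 1 p) k (fun _ => ww lam k n * ‖x.2 n k‖),
        if_pos hkmem]
    rw [hS1] at hSval
    refine ⟨n, k, hn, hk1, hkp, ?_, hz1, hz2⟩
    show ‖x.2 n k‖ = 1 / ww lam k n
    rw [eq_div_iff hwn.ne']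
    linarith
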